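/- In the HNN extension K of D_n = ⟨A, B⟩ by the stable letter T with T B T⁻¹ = A B (n ≥ 3 odd), the subgroup Γ generated by the n conjugates Aᵏ C A⁻ᵏ (k = 0, 1, …, n−1), where C = A^{(n−1)/2} T, is a normal subgroup of index 2n in K, and Γ is a free group of rank n. -/

import Mathlib

open DihedralGroup HNNExtension SemidirectProduct

namespace HNNSchottky

variable (n : ℕ) [NeZero n]

/-- The permutation action of the dihedral group on `ZMod n`. -/
def perm : DihedralGroup n →* Equiv.Perm (ZMod n) where
  toFun d := match d with
    | .r i => Equiv.subRight i
    | .sr i => Equiv.subLeft i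
  map_one' := by
    show Equiv.subRight (0 : ZMod n) = 1
    ext k; simp
  map_mul' d e := by
    rcases d with i | i <;> rcases e with j | j <;>
      · show _ = _
        ext k
        simp only [r_mul_r, r_mul_sr, sr_mul_r, sr_mul_sr, Equiv.Perm.mul_apply,
          Equiv.subRight_apply, Equiv.subLeft_apply]
        ring

@[simp] lemma perm_r (i k : ZMod n) : perm n (.r i) k = k - i := rfl
@[simp] lemma perm_sr (i k : ZMod n) : perm n (.sr i) k = i - k := rfl

/-- `Perm X` acts on `FreeGroup X` by permuting generators. -/
def permAut (X : Type*) : Equiv.Perm X →* MulAut (FreeGroup X) where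
  toFun e := (FreeGroup.freeGroupCongr e : FreeGroup X ≃* FreeGroup X)
  map_one' := by
    apply MulEquiv.toMonoidHom_injective
    ext x
    simp [FreeGroup.freeGroupCongr]
  map_mul' e f := by
    apply MulEquiv.toMonoidHom_injective
    ext x
    simp [FreeGroup.freeGroupCongr]

def act : DihedralGroup n →* MulAut (FreeGroup (ZMod n)) :=
  (permAut (ZMod n)).comp (perm n)

@[simp] lemma act_of (d : DihedralGroup n) (k : ZMod n) :
    act n d (FreeGroup.of k) = FreeGroup.of (perm n d k) := by
  simp [act, permAut, FreeGroup.freeGroupCongr]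

end HNNSchottky

namespace HNNSchottky

set_option linter.unusedSectionVars false

variable (n : ℕ) [NeZero n]

abbrev Gsd := FreeGroup (ZMod n) ⋊[act n] DihedralGroup n

variable (φ : (Subgroup.closure {DihedralGroup.sr 0} : Subgroup (DihedralGroup n)) ≃*
      (Subgroup.closure {DihedralGroup.r 1 * DihedralGroup.sr 0} : Subgroup (DihedralGroup n)))

abbrev K := HNNExtension (DihedralGroup n)
    (Subgroup.closure {DihedralGroup.sr 0})
    (Subgroup.closure {DihedralGroup.r 1 * DihedralGroup.sr 0}) φ

lemma eq_one_or_eq_sr {x : DihedralGroup n}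
    (hx : x ∈ Subgroup.closure ({sr 0} : Set (DihedralGroup n))) :
    x = 1 ∨ x = sr 0 := by
  have hinv : (sr 0 : DihedralGroup n)⁻¹ = sr 0 :=
    inv_eq_of_mul_eq_one_left (sr_mul_self 0)
  induction hx using Subgroup.closure_induction with
  | mem y hy => right; simpa using hy
  | one => left; rfl
  | mul a b _ _ ha hb =>
      rcases ha with rfl | rfl <;> rcases hb with rfl | rfl <;>
        simp [sr_mul_self, ← one_def]
  | inv a _ ha => rcases ha with rfl | rfl <;> simp [hinv]

lemma hM (hn : 3 ≤ n) (hodd : Odd n) : 2 * ((n - 1) / 2) + 1 = n := by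
  obtain ⟨k, hk⟩ := hodd; omega

lemma zmod_M (hn : 3 ≤ n) (hodd : Odd n) :
    ((((n - 1) / 2 : ℕ)) : ZMod n) * 2 + 1 = 0 := by
  have h := hM n hn hodd
  calc ((((n - 1) / 2 : ℕ)) : ZMod n) * 2 + 1
      = ((2 * ((n - 1) / 2) + 1 : ℕ) : ZMod n) := by push_cast; ring
    _ = ((n : ℕ) : ZMod n) := by rw [h]
    _ = 0 := ZMod.natCast_self n

end HNNSchottky

namespace HNNSchottky

set_option linter.unusedSectionVars false

variable (n : ℕ) [NeZero n]

@[simp] lemma r_inv (i : ZMod n) : (r i)⁻¹ = r (-i) := rfl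
@[simp] lemma sr_inv (i : ZMod n) : (sr i)⁻¹ = sr i := rfl

variable (φ : (Subgroup.closure {DihedralGroup.sr 0} : Subgroup (DihedralGroup n)) ≃*
      (Subgroup.closure {DihedralGroup.r 1 * DihedralGroup.sr 0} : Subgroup (DihedralGroup n)))

variable (hn : 3 ≤ n) (hodd : Odd n)
  (hφ : (φ ⟨DihedralGroup.sr 0, Subgroup.subset_closure (Set.mem_singleton _)⟩ :
        DihedralGroup n) = DihedralGroup.r 1 * DihedralGroup.sr 0)

/-- the image of the stable letter -/
def xT : Gsd n :=
  inl (FreeGroup.of (((n - 1) / 2 : ℕ) : ZMod n)) *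
    inr (r (-(((n - 1) / 2 : ℕ) : ZMod n)))

lemma neg_one_sub_M (hn : 3 ≤ n) (hodd : Odd n) :
    (-1 : ZMod n) - (((n - 1) / 2 : ℕ) : ZMod n) = (((n - 1) / 2 : ℕ) : ZMod n) := by
  have h := zmod_M n hn hodd
  linear_combination -h

include hn hodd hφ in
lemma lift_cond :
    ∀ a : (Subgroup.closure {DihedralGroup.sr 0} : Subgroup (DihedralGroup n)),
      xT n * inr (a : DihedralGroup n) = inr ((φ a : DihedralGroup n)) * xT n := by
  intro a
  rcases eq_one_or_eq_sr n a.2 with h | h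
  · have ha : a = 1 := Subtype.ext h
    subst ha
    simp
    exact (congrArg (fun x => (inr (Subtype.val x) : Gsd n)) (map_one φ)).trans (map_one _)
  · have ha : a = ⟨sr 0, Subgroup.subset_closure (Set.mem_singleton _)⟩ := Subtype.ext h
    subst ha
    rw [hφ]
    set M : ZMod n := (((n - 1) / 2 : ℕ) : ZMod n) with hMdef
    have key : (-1 : ZMod n) - M = M := neg_one_sub_M n hn hodd
    apply SemidirectProduct.ext
    · simp only [xT, mul_left, mul_right, left_inl, right_inl, left_inr, right_inr,
        map_one, map_mul, one_mul, mul_one, act_of, MulAut.mul_apply]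
      simp only [act_of, perm_r, perm_sr]
      congr 1
      linear_combination zmod_M n hn hodd
    · simp only [xT, mul_left, mul_right, left_inl, right_inl, left_inr, right_inr,
        map_one, map_mul, one_mul, mul_one]
      simp only [r_mul_sr, sr_mul_r, r_mul_r, sr_mul_sr]
      congr 1
      linear_combination zmod_M n hn hodd

end HNNSchottky

namespace HNNSchottky

set_option linter.unusedSectionVars false

variable (n : ℕ) [NeZero n]
variable (φ : (Subgroup.closure {DihedralGroup.sr 0} : Subgroup (DihedralGroup n)) ≃*
      (Subgroup.closure {DihedralGroup.r 1 * DihedralGroup.sr 0} : Subgroup (DihedralGroup n)))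
variable (hn : 3 ≤ n) (hodd : Odd n)
  (hφ : (φ ⟨DihedralGroup.sr 0, Subgroup.subset_closure (Set.mem_singleton _)⟩ :
        DihedralGroup n) = DihedralGroup.r 1 * DihedralGroup.sr 0)

/-- The homomorphism `K →* Gsd`. -/
def fK : K n φ →* Gsd n :=
  HNNExtension.lift inr (xT n) (lift_cond n φ hn hodd hφ)

@[simp] lemma fK_of (g : DihedralGroup n) : fK n φ hn hodd hφ (of g) = inr g :=
  HNNExtension.lift_of _ _ _ _

@[simp] lemma fK_t : fK n φ hn hodd hφ t = xT n :=
  HNNExtension.lift_t _ _ _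

include hφ in
lemma t_mul_b : (t : K n φ) * of (sr 0) = of (sr (-1 : ZMod n)) * t := by
  have h := t_mul_of (φ := φ) ⟨sr 0, Subgroup.subset_closure (Set.mem_singleton _)⟩
  rw [hφ] at h
  have h2 : (r 1 * sr 0 : DihedralGroup n) = sr (-1 : ZMod n) := by rw [r_mul_sr, zero_sub]
  rw [h]
  exact congrArg (fun z => of z * (t : K n φ)) h2

/-- `C = A^((n-1)/2) * t` -/
def cel : K n φ := of (r (((n - 1) / 2 : ℕ) : ZMod n)) * t

include hn hodd hφ in
lemma bcb : of (sr 0) * cel n φ * of (sr 0) = cel n φ := by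
  set M : ZMod n := (((n - 1) / 2 : ℕ) : ZMod n) with hMdef
  have key : (-1 : ZMod n) - M = M := neg_one_sub_M n hn hodd
  have h1 : (sr 0 * r M : DihedralGroup n) = sr M := by rw [sr_mul_r, zero_add]
  calc of (sr 0) * cel n φ * of (sr 0)
      = of (sr 0 * r M) * (t * of (sr 0)) := by
        simp only [cel, map_mul, mul_assoc]; rfl
    _ = of (sr M) * (of (sr (-1 : ZMod n)) * t) := by
        rw [h1, t_mul_b n φ hφ]
    _ = of (sr M * sr (-1 : ZMod n)) * t := by rw [map_mul, mul_assoc]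
    _ = of (r ((-1 : ZMod n) - M)) * t := by rw [sr_mul_sr]
    _ = cel n φ := by rw [key]; rfl

/-- The elements `w k = A^(-k) C A^k`. -/
def w (k : ZMod n) : K n φ := of (r (-k)) * cel n φ * of (r k)

lemma conj_r (j k : ZMod n) :
    of (r j) * w n φ k * (of (r j))⁻¹ = w n φ (k - j) := by
  have hj : (of (r j) : K n φ)⁻¹ = of (r (-j)) := by rw [← map_inv, r_inv]
  have e1 : (j + -k : ZMod n) = -(k - j) := by ring
  have e2 : (k + -j : ZMod n) = k - j := by ring
  rw [hj]
  calc of (r j) * (of (r (-k)) * cel n φ * of (r k)) * of (r (-j))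
      = of (r j * r (-k)) * cel n φ * of (r k * r (-j)) := by
        simp only [map_mul]; group
    _ = w n φ (k - j) := by rw [r_mul_r, r_mul_r, e1, e2]; rfl

include hn hodd hφ in
lemma conj_b (k : ZMod n) :
    of (sr 0) * w n φ k * of (sr 0) = w n φ (-k) := by
  have h1 : (sr 0 * r (-k) : DihedralGroup n) = r k * sr 0 := by
    rw [sr_mul_r, zero_add, r_mul_sr, zero_sub]
  have h2 : (r k * sr 0 : DihedralGroup n) = sr 0 * r (-k) := h1.symm
  calc of (sr 0) * (of (r (-k)) * cel n φ * of (r k)) * of (sr 0)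
      = of (sr 0 * r (-k)) * cel n φ * of (r k * sr 0) := by
        simp only [map_mul]; group
    _ = of (r k) * (of (sr 0) * cel n φ * of (sr 0)) * of (r (-k)) := by
        nth_rewrite 1 [h1]
        nth_rewrite 2 [h2]
        simp only [map_mul]; group
    _ = of (r k) * cel n φ * of (r (-k)) := by rw [bcb n φ hn hodd hφ]
    _ = w n φ (-k) := by rw [w, neg_neg]

include hn hodd hφ in
lemma conj_sr (i k : ZMod n) :
    of (sr i) * w n φ k * (of (sr i))⁻¹ = w n φ (i - k) := by
  have hsr : (of (sr i) : K n φ)⁻¹ = of (sr i) := by rw [← map_inv, sr_inv]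
  have h1 : (sr i : DihedralGroup n) = r (-i) * sr 0 := by
    rw [r_mul_sr, zero_sub, neg_neg]
  have h2 : (sr i : DihedralGroup n) = sr 0 * r i := by rw [sr_mul_r, zero_add]
  have hi : (of (r (-i)) : K n φ)⁻¹ = of (r i) := by
    rw [← map_inv, r_inv, neg_neg]
  rw [hsr]
  calc of (sr i) * w n φ k * of (sr i)
      = of (r (-i)) * (of (sr 0) * w n φ k * of (sr 0)) * of (r i) := by
        nth_rewrite 1 [h1]
        rw [h2]
        simp only [map_mul]; group
    _ = of (r (-i)) * w n φ (-k) * (of (r (-i)))⁻¹ := by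
        rw [conj_b n φ hn hodd hφ, hi]
    _ = w n φ (i - k) := by rw [conj_r, sub_neg_eq_add, neg_add_eq_sub]

include hn hodd hφ in
lemma conj_d (d : DihedralGroup n) (k : ZMod n) :
    of d * w n φ k * (of d)⁻¹ = w n φ (perm n d k) := by
  rcases d with i | i
  · rw [perm_r]; exact conj_r n φ _ _
  · rw [perm_sr]; exact conj_sr n φ hn hodd hφ _ _

end HNNSchottky

namespace HNNSchottky

set_option linter.unusedSectionVars false

variable (n : ℕ) [NeZero n]
variable (φ : (Subgroup.closure {DihedralGroup.sr 0} : Subgroup (DihedralGroup n)) ≃*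
      (Subgroup.closure {DihedralGroup.r 1 * DihedralGroup.sr 0} : Subgroup (DihedralGroup n)))
variable (hn : 3 ≤ n) (hodd : Odd n)
  (hφ : (φ ⟨DihedralGroup.sr 0, Subgroup.subset_closure (Set.mem_singleton _)⟩ :
        DihedralGroup n) = DihedralGroup.r 1 * DihedralGroup.sr 0)

include hn hodd hφ in
lemma gcomp : ∀ g : DihedralGroup n,
    (FreeGroup.lift (w n φ)).comp ((act n g).toMonoidHom) =
      (MulAut.conj (of g)).toMonoidHom.comp (FreeGroup.lift (w n φ)) := by
  intro g
  apply FreeGroup.ext_hom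
  intro k
  simp only [MonoidHom.comp_apply, MulEquiv.coe_toMonoidHom, act_of, FreeGroup.lift_apply_of,
    MulAut.conj_apply]
  exact (conj_d n φ hn hodd hφ g k).symm

/-- The homomorphism `Gsd →* K`. -/
def gK : Gsd n →* K n φ :=
  SemidirectProduct.lift (FreeGroup.lift (w n φ)) of (gcomp n φ hn hodd hφ)

@[simp] lemma gK_inl_of (k : ZMod n) :
    gK n φ hn hodd hφ (inl (FreeGroup.of k)) = w n φ k := by
  simp only [gK, SemidirectProduct.lift_inl, FreeGroup.lift_apply_of]

@[simp] lemma gK_inr (d : DihedralGroup n) : gK n φ hn hodd hφ (inr d) = of d := by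
  simp only [gK, SemidirectProduct.lift_inr]

lemma fK_w (k : ZMod n) :
    fK n φ hn hodd hφ (w n φ k) = inl (FreeGroup.of k) := by
  set M : ZMod n := (((n - 1) / 2 : ℕ) : ZMod n) with hMdef
  simp only [w, cel, map_mul, fK_of, fK_t, xT]
  apply SemidirectProduct.ext
  · simp only [mul_left, mul_right, left_inl, right_inl, left_inr, right_inr,
      map_one, map_mul, one_mul, mul_one, act_of, MulAut.mul_apply, perm_r]
    rw [← hMdef]
    congr 1
    ring
  · simp only [mul_left, mul_right, left_inl, right_inl, left_inr, right_inr,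
      map_one, map_mul, one_mul, mul_one, r_mul_r]
    rw [← hMdef]
    rw [show (-k + (M + -M) + k : ZMod n) = 0 by ring, ← one_def]

lemma gf : (gK n φ hn hodd hφ).comp (fK n φ hn hodd hφ) = MonoidHom.id (K n φ) := by
  set M : ZMod n := (((n - 1) / 2 : ℕ) : ZMod n) with hMdef
  refine HNNExtension.hom_ext ?_ ?_
  · apply MonoidHom.ext
    intro d
    simp only [MonoidHom.comp_apply, MonoidHom.id_apply, fK_of, gK_inr]
  · simp only [MonoidHom.comp_apply, MonoidHom.id_apply, fK_t, xT, map_mul, gK_inl_of, gK_inr]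
    rw [← hMdef, w, cel]
    rw [mul_assoc (of (r (-M)) * (of (r M) * t)), ← map_mul, r_mul_r,
      show (M + -M : ZMod n) = 0 by ring, ← one_def, map_one, mul_one,
      ← mul_assoc, ← map_mul, r_mul_r, show (-M + M : ZMod n) = 0 by ring,
      ← one_def, map_one, one_mul]

lemma fg : (fK n φ hn hodd hφ).comp (gK n φ hn hodd hφ) = MonoidHom.id (Gsd n) := by
  refine SemidirectProduct.hom_ext ?_ ?_
  · apply FreeGroup.ext_hom
    intro k
    simp only [MonoidHom.comp_apply, MonoidHom.id_apply, gK_inl_of, fK_w]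
  · apply MonoidHom.ext
    intro d
    simp only [MonoidHom.comp_apply, MonoidHom.id_apply, gK_inr, fK_of]

/-- The isomorphism `K ≃* Gsd`. -/
def eK : K n φ ≃* Gsd n :=
  MonoidHom.toMulEquiv (fK n φ hn hodd hφ) (gK n φ hn hodd hφ)
    (gf n φ hn hodd hφ) (fg n φ hn hodd hφ)

end HNNSchottky



open HNNExtension

/-- In the HNN extension `K` of `Dₙ = ⟨A,B⟩` (`A = r 1`, `B = sr 0`,
`n ≥ 3` odd) by the stable letter `T = t` with `T B T⁻¹ = AB`, the subgroup `Γ`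
generated by the `n` conjugates `Aᵏ C A⁻ᵏ` (`k = 0,…,n−1`), where
`C = A^((n−1)/2) T`, is a normal subgroup of index `2n`, and is free of rank `n`. -/
theorem hnn_dihedral_odd_schottky_subgroup (n : ℕ) (hn : 3 ≤ n) (hodd : Odd n)
    (φ : (Subgroup.closure {DihedralGroup.sr 0} : Subgroup (DihedralGroup n)) ≃*
      (Subgroup.closure {DihedralGroup.r 1 * DihedralGroup.sr 0} : Subgroup (DihedralGroup n)))
    (hφ : (φ ⟨DihedralGroup.sr 0, Subgroup.subset_closure (Set.mem_singleton _)⟩ :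
        DihedralGroup n) = DihedralGroup.r 1 * DihedralGroup.sr 0)
    (Γ : Subgroup (HNNExtension (DihedralGroup n) _ _ φ))
    (hΓ : Γ = Subgroup.closure
      { x | ∃ k : ℕ, k < n ∧
          x = (HNNExtension.of (DihedralGroup.r 1)) ^ k *
              ((HNNExtension.of (DihedralGroup.r 1)) ^ ((n - 1) / 2) * HNNExtension.t) *
              ((HNNExtension.of (DihedralGroup.r 1)) ^ k)⁻¹ }) :
    Γ.Normal ∧ Γ.index = 2 * n ∧ Nonempty (Γ ≃* FreeGroup (Fin n)) := by
  haveI : NeZero n := ⟨by omega⟩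
  have hpow : ∀ j : ℕ, (HNNExtension.of (DihedralGroup.r 1) : HNNSchottky.K n φ) ^ j
      = HNNExtension.of (DihedralGroup.r (j : ZMod n)) := by
    intro j
    rw [← map_pow, DihedralGroup.r_one_pow]
  have hgen : ∀ k : ℕ,
      (HNNExtension.of (DihedralGroup.r 1) : HNNSchottky.K n φ) ^ k *
        ((HNNExtension.of (DihedralGroup.r 1)) ^ ((n - 1) / 2) * HNNExtension.t) *
        ((HNNExtension.of (DihedralGroup.r 1)) ^ k)⁻¹
      = HNNSchottky.w n φ (-(k : ZMod n)) := by
    intro k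
    rw [hpow, hpow, ← map_inv, HNNSchottky.r_inv]
    simp only [HNNSchottky.w, HNNSchottky.cel, neg_neg]
  have hS : { x : HNNSchottky.K n φ | ∃ k : ℕ, k < n ∧
          x = (HNNExtension.of (DihedralGroup.r 1)) ^ k *
              ((HNNExtension.of (DihedralGroup.r 1)) ^ ((n - 1) / 2) * HNNExtension.t) *
              ((HNNExtension.of (DihedralGroup.r 1)) ^ k)⁻¹ }
      = Set.range (HNNSchottky.w n φ) := by
    ext x
    constructor
    · rintro ⟨k, hk, rfl⟩
      exact ⟨-(k : ZMod n), (hgen k).symm⟩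
    · rintro ⟨j, rfl⟩
      refine ⟨(-j).val, ZMod.val_lt _, ?_⟩
      rw [hgen]
      congr 1
      rw [ZMod.natCast_rightInverse (-j), neg_neg]
  rw [hS] at hΓ
  set F := HNNSchottky.fK n φ hn hodd hφ with hF
  have hinj : Function.Injective F := (HNNSchottky.eK n φ hn hodd hφ).injective
  have himg : F '' Set.range (HNNSchottky.w n φ)
      = (inl : FreeGroup (ZMod n) →* HNNSchottky.Gsd n) '' Set.range FreeGroup.of := by
    ext x
    constructor
    · rintro ⟨y, ⟨j, rfl⟩, rfl⟩
      exact ⟨FreeGroup.of j, ⟨j, rfl⟩, (HNNSchottky.fK_w n φ hn hodd hφ j).symm⟩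
    · rintro ⟨y, ⟨j, rfl⟩, rfl⟩
      exact ⟨HNNSchottky.w n φ j, ⟨j, rfl⟩, HNNSchottky.fK_w n φ hn hodd hφ j⟩
  have hmap : Γ.map F = (inl : FreeGroup (ZMod n) →* HNNSchottky.Gsd n).range := by
    rw [hΓ, MonoidHom.map_closure, himg, ← MonoidHom.map_closure,
      FreeGroup.closure_range_of, ← MonoidHom.range_eq_map]
  have hcomap : Γ = Subgroup.comap F
      ((inl : FreeGroup (ZMod n) →* HNNSchottky.Gsd n).range) := by
    rw [← hmap, Subgroup.comap_map_eq_self_of_injective hinj]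
  have hker : Γ = (SemidirectProduct.rightHom.comp F).ker := by
    rw [hcomap, SemidirectProduct.range_inl_eq_ker_rightHom, MonoidHom.comap_ker]
  refine ⟨?_, ?_, ?_⟩
  · rw [hker]; exact MonoidHom.normal_ker _
  · have hsurjF : Function.Surjective F := (HNNSchottky.eK n φ hn hodd hφ).surjective
    have hsurj : Function.Surjective (SemidirectProduct.rightHom.comp F) := by
      rw [MonoidHom.coe_comp]
      exact SemidirectProduct.rightHom_surjective.comp hsurjF
    rw [hker, Subgroup.index_ker, MonoidHom.range_eq_top.2 hsurj, Subgroup.card_top,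
      Nat.card_eq_fintype_card, DihedralGroup.card]
  · refine ⟨?_⟩
    refine (Subgroup.equivMapOfInjective Γ F hinj).trans ?_
    refine (MulEquiv.subgroupCongr hmap).trans ?_
    refine (MonoidHom.ofInjective SemidirectProduct.inl_injective).symm.trans ?_
    exact FreeGroup.freeGroupCongr (Fintype.equivFinOfCardEq (ZMod.card n))
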